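/- Assume β + λω_k ≠ 0 for all k = 0,…,N−1 and σ ∈ ℝ. Let J_N be the N×N all-ones matrix and define the N×N matrix M = (σ²/λ) ((1/N) J_N − I_N) (λ² (A^⊤)² − β² I_N)^{−1} + (σ²/(2β)) A (λA − β I_N)^{−1} (λ A^⊤ + β I_N)^{−1} A^⊤ (all inverses exist under the stated hypotheses). Then for every n ∈ {1,…,N} and every j ∈ {0,…,N−1}, the (n, m) entry of M, where m ∈ {1,…,N} with m ≡ n + j (mod N), equals (σ²/(2βN)) Σ_{k=1}^{N−1} ( γ_k^j / (λ − β − λγ_k) ) · ( (1 − γ_k)² / (λ − (λ+β)γ_k) − 2β / (λ(λ + β − λγ_k)) ). -/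

import Mathlib

open Matrix Complex Finset

noncomputable section

/-- The N×N matrix with -1 on the diagonal and 1 on the (cyclic) superdiagonal. -/
def ringMat (N : ℕ) : Matrix (Fin N) (Fin N) ℝ :=
  fun n m => if (m : ℕ) = (n : ℕ) then -1 else if (m : ℕ) = ((n : ℕ) + 1) % N then 1 else 0

/-- Complexification of `ringMat`. -/
def Ac (N : ℕ) : Matrix (Fin N) (Fin N) ℂ := (ringMat N).map Complex.ofReal

/-- γ_k = e^{2πik/N} -/
def gam (N k : ℕ) : ℂ := Complex.exp (2 * Real.pi * Complex.I * k / N)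

/-- The N×N all-ones matrix. -/
def onesMat (N : ℕ) : Matrix (Fin N) (Fin N) ℂ := Matrix.of fun _ _ => 1

/-- The matrix M = (σ²/λ)((1/N)J − I)(λ²(Aᵀ)² − β²I)⁻¹
  + (σ²/(2β)) A (λA − βI)⁻¹ (λAᵀ + βI)⁻¹ Aᵀ. -/
def covMat (N : ℕ) (lam beta σ : ℝ) : Matrix (Fin N) (Fin N) ℂ :=
  ((σ : ℂ) ^ 2 / lam) •
      (((N : ℂ)⁻¹ • onesMat N - 1) *
        ((lam : ℂ) ^ 2 • ((Ac N)ᵀ * (Ac N)ᵀ) - (beta : ℂ) ^ 2 • 1)⁻¹) +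
    ((σ : ℂ) ^ 2 / (2 * beta)) •
      (Ac N * ((lam : ℂ) • Ac N - (beta : ℂ) • 1)⁻¹ *
        ((lam : ℂ) • (Ac N)ᵀ + (beta : ℂ) • 1)⁻¹ * (Ac N)ᵀ)

lemma gam_eq (N k : ℕ) : gam N k = gam N 1 ^ k := by
  rw [gam, gam, ← Complex.exp_nat_mul]
  congr 1; push_cast; ring

lemma gam_prim (N : ℕ) (hN : N ≠ 0) : IsPrimitiveRoot (gam N 1) N := by
  have := Complex.isPrimitiveRoot_exp N hN
  have h : gam N 1 = Complex.exp (2 * Real.pi * Complex.I / N) := by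
    rw [gam]; norm_num
  rwa [h]

lemma gam_ne_zero (N k : ℕ) : gam N k ≠ 0 := Complex.exp_ne_zero _

lemma gam_pow_N (N k : ℕ) (hN : N ≠ 0) : gam N k ^ N = 1 := by
  rw [gam_eq, ← pow_mul, mul_comm, pow_mul, (gam_prim N hN).pow_eq_one, one_pow]

lemma ortho (N : ℕ) (hN : N ≠ 0) (a b : ℕ) (ha : a < N) (hb : b < N) :
    ∑ k ∈ range N, gam N k ^ a * (gam N k ^ b)⁻¹ = if a = b then (N : ℂ) else 0 := by
  have key : ∀ k, gam N k ^ a * (gam N k ^ b)⁻¹ = (gam N 1 ^ a * (gam N 1 ^ b)⁻¹) ^ k := by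
    intro k
    rw [gam_eq N k, mul_pow, inv_pow, ← pow_mul, ← pow_mul, mul_comm k a, mul_comm k b,
      pow_mul, pow_mul]
  rw [Finset.sum_congr rfl (fun k _ => key k)]
  set x := gam N 1 ^ a * (gam N 1 ^ b)⁻¹ with hx
  by_cases hab : a = b
  · subst hab
    have : x = 1 := by
      rw [hx, mul_inv_cancel₀ (pow_ne_zero _ (gam_ne_zero N 1))]
    simp [this]
  · rw [if_neg hab]
    have hx1 : x ≠ 1 := by
      intro h
      apply hab
      apply (gam_prim N hN).pow_inj ha hb
      rw [hx, mul_inv_eq_one₀ (pow_ne_zero _ (gam_ne_zero N 1))] at h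
      exact h
    rw [geom_sum_eq hx1]
    have hxN : x ^ N = 1 := by
      rw [hx, mul_pow, inv_pow, ← pow_mul, ← pow_mul, mul_comm a N, mul_comm b N,
        pow_mul, pow_mul, (gam_prim N hN).pow_eq_one, one_pow, one_pow, inv_one, mul_one]
    rw [hxN]; simp

lemma gam_pow_mod (N k a : ℕ) (hN : N ≠ 0) : gam N k ^ a = gam N k ^ (a % N) := by
  conv_lhs => rw [← Nat.div_add_mod a N]
  rw [pow_add, pow_mul, gam_pow_N N k hN, one_pow, one_mul]

lemma orthoMod (N : ℕ) (hN : N ≠ 0) (a b : ℕ) :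
    ∑ k ∈ range N, gam N k ^ a * (gam N k ^ b)⁻¹ = if a % N = b % N then (N : ℂ) else 0 := by
  have : ∀ k ∈ range N, gam N k ^ a * (gam N k ^ b)⁻¹
      = gam N k ^ (a % N) * (gam N k ^ (b % N))⁻¹ := by
    intro k _; rw [← gam_pow_mod N k a hN, ← gam_pow_mod N k b hN]
  rw [Finset.sum_congr rfl this,
    ortho N hN _ _ (Nat.mod_lt _ (Nat.pos_of_ne_zero hN)) (Nat.mod_lt _ (Nat.pos_of_ne_zero hN))]

lemma gam_comm (N k a : ℕ) : gam N k ^ a = gam N a ^ k := by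
  rw [gam_eq N k, gam_eq N a, ← pow_mul, ← pow_mul, mul_comm]

/-- circulant with Fourier symbol g -/
def Emat (N : ℕ) (g : ℕ → ℂ) : Matrix (Fin N) (Fin N) ℂ :=
  Matrix.of fun n m => (N : ℂ)⁻¹ * ∑ k ∈ range N, g k * (gam N k ^ (m : ℕ) * (gam N k ^ (n : ℕ))⁻¹)

lemma Emat_congr (N : ℕ) (g h : ℕ → ℂ) (hg : ∀ k < N, g k = h k) : Emat N g = Emat N h := by
  ext n m
  simp only [Emat, Matrix.of_apply]
  congr 1
  exact Finset.sum_congr rfl fun k hk => by rw [hg k (Finset.mem_range.mp hk)]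

lemma Emat_one (N : ℕ) (hN : N ≠ 0) : Emat N (fun _ => 1) = 1 := by
  ext n m
  simp only [Emat, Matrix.of_apply, one_mul]
  rw [orthoMod N hN]
  rw [Nat.mod_eq_of_lt m.isLt, Nat.mod_eq_of_lt n.isLt]
  by_cases h : (m : ℕ) = (n : ℕ)
  · have : m = n := Fin.ext h
    subst this
    simp [Matrix.one_apply, inv_mul_cancel₀ (Nat.cast_ne_zero.mpr hN : (N:ℂ) ≠ 0)]
  · have hnm : n ≠ m := fun hc => h (by rw [hc])
    simp [Matrix.one_apply, h, hnm]

lemma Emat_mul (N : ℕ) (hN : N ≠ 0) (g h : ℕ → ℂ) :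
    Emat N g * Emat N h = Emat N (fun k => g k * h k) := by
  have hNc : (N : ℂ) ≠ 0 := Nat.cast_ne_zero.mpr hN
  ext n m
  simp only [Emat, Matrix.mul_apply, Matrix.of_apply]
  have step1 : ∀ p : Fin N,
      ((N : ℂ)⁻¹ * ∑ k ∈ range N, g k * (gam N k ^ (p : ℕ) * (gam N k ^ (n : ℕ))⁻¹)) *
      ((N : ℂ)⁻¹ * ∑ l ∈ range N, h l * (gam N l ^ (m : ℕ) * (gam N l ^ (p : ℕ))⁻¹))
      = (N : ℂ)⁻¹ * (N : ℂ)⁻¹ * ∑ k ∈ range N, ∑ l ∈ range N,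
          (g k * (gam N k ^ (n : ℕ))⁻¹) *
            ((h l * gam N l ^ (m : ℕ)) * (gam N (p : ℕ) ^ k * (gam N (p : ℕ) ^ l)⁻¹)) := by
    intro p
    rw [mul_mul_mul_comm, Finset.sum_mul_sum]
    congr 1
    refine Finset.sum_congr rfl fun k _ => Finset.sum_congr rfl fun l _ => ?_
    rw [gam_comm N k (p : ℕ), gam_comm N l (p : ℕ)]
    ring
  rw [Finset.sum_congr rfl fun p _ => step1 p, ← Finset.mul_sum, Finset.sum_comm]
  have step2 : ∀ k ∈ range N,
      (∑ p : Fin N, ∑ l ∈ range N,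
        (g k * (gam N k ^ (n : ℕ))⁻¹) *
          ((h l * gam N l ^ (m : ℕ)) * (gam N (p : ℕ) ^ k * (gam N (p : ℕ) ^ l)⁻¹)))
      = (g k * (gam N k ^ (n : ℕ))⁻¹) * ((h k * gam N k ^ (m : ℕ)) * N) := by
    intro k hk
    rw [Finset.sum_comm]
    have inner : ∀ l ∈ range N,
        (∑ p : Fin N,
          (g k * (gam N k ^ (n : ℕ))⁻¹) *
            ((h l * gam N l ^ (m : ℕ)) * (gam N (p : ℕ) ^ k * (gam N (p : ℕ) ^ l)⁻¹)))
        = if k = l then (g k * (gam N k ^ (n : ℕ))⁻¹) * ((h l * gam N l ^ (m : ℕ)) * N)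
          else 0 := by
      intro l hl
      rw [← Finset.mul_sum, ← Finset.mul_sum]
      have : (∑ p : Fin N, gam N (p : ℕ) ^ k * (gam N (p : ℕ) ^ l)⁻¹)
          = if k = l then (N : ℂ) else 0 := by
        rw [Fin.sum_univ_eq_sum_range (fun p => gam N p ^ k * (gam N p ^ l)⁻¹) N]
        exact ortho N hN k l (Finset.mem_range.mp hk) (Finset.mem_range.mp hl)
      rw [this]
      simp only [mul_ite, mul_zero]
    rw [Finset.sum_congr rfl inner, Finset.sum_ite_eq, if_pos hk]
  rw [Finset.sum_congr rfl step2]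
  rw [Finset.mul_sum, Finset.mul_sum]
  refine Finset.sum_congr rfl fun k _ => ?_
  have hNN : (N : ℂ) * ((N : ℂ)⁻¹ * (N : ℂ)⁻¹) = (N : ℂ)⁻¹ := by
    rw [← mul_assoc, mul_inv_cancel₀ hNc, one_mul]
  linear_combination (g k * (gam N k ^ (n : ℕ))⁻¹ * (h k * gam N k ^ (m : ℕ))) * hNN

lemma succ_mod_ne (N : ℕ) (hN2 : 2 ≤ N) (a : ℕ) (ha : a < N) : (a + 1) % N ≠ a := by
  rcases Nat.lt_or_ge (a + 1) N with h | h
  · rw [Nat.mod_eq_of_lt h]; omega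
  · have hEq : a + 1 = N := by omega
    rw [hEq, Nat.mod_self]; omega

lemma gam_zero (N : ℕ) : gam N 0 = 1 := by simp [gam]

lemma Emat_smul (N : ℕ) (c : ℂ) (g : ℕ → ℂ) :
    c • Emat N g = Emat N (fun k => c * g k) := by
  ext n m
  simp only [Emat, Matrix.smul_apply, Matrix.of_apply, smul_eq_mul]
  rw [show ∀ S : ℂ, c * ((N:ℂ)⁻¹ * S) = (N:ℂ)⁻¹ * (c * S) from fun S => by ring,
    Finset.mul_sum]
  congr 1
  exact Finset.sum_congr rfl fun k _ => by ring

lemma Emat_add (N : ℕ) (g h : ℕ → ℂ) :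
    Emat N g + Emat N h = Emat N (fun k => g k + h k) := by
  ext n m
  simp only [Emat, Matrix.add_apply, Matrix.of_apply]
  rw [← mul_add, ← Finset.sum_add_distrib]
  congr 1
  exact Finset.sum_congr rfl fun k _ => by ring

lemma Emat_sub (N : ℕ) (g h : ℕ → ℂ) :
    Emat N g - Emat N h = Emat N (fun k => g k - h k) := by
  ext n m
  simp only [Emat, Matrix.sub_apply, Matrix.of_apply]
  rw [← mul_sub, ← Finset.sum_sub_distrib]
  congr 1
  exact Finset.sum_congr rfl fun k _ => by ring

lemma Emat_inv (N : ℕ) (hN : N ≠ 0) (g : ℕ → ℂ) (hg : ∀ k < N, g k ≠ 0) :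
    (Emat N g)⁻¹ = Emat N (fun k => (g k)⁻¹) := by
  apply Matrix.inv_eq_right_inv
  rw [Emat_mul N hN, ← Emat_one N hN]
  exact Emat_congr N _ _ fun k hk => mul_inv_cancel₀ (hg k hk)

lemma onesMat_eq (N : ℕ) (hN : N ≠ 0) :
    onesMat N = Emat N (fun k => if k = 0 then (N : ℂ) else 0) := by
  ext n m
  simp only [onesMat, Emat, Matrix.of_apply]
  rw [Finset.sum_congr rfl (fun k _ => by
    show (if k = 0 then (N:ℂ) else 0) * (gam N k ^ (m:ℕ) * (gam N k ^ (n:ℕ))⁻¹)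
      = if k = 0 then (N:ℂ) * (gam N k ^ (m:ℕ) * (gam N k ^ (n:ℕ))⁻¹) else 0
    split <;> simp)]
  rw [Finset.sum_ite_eq' (range N) 0, if_pos (Finset.mem_range.mpr (Nat.pos_of_ne_zero hN))]
  rw [gam_zero]
  simp [Nat.cast_ne_zero.mpr hN]

lemma Act_eq (N : ℕ) (hN2 : 2 ≤ N) :
    (Ac N)ᵀ = Emat N (fun k => gam N k - 1) := by
  have hN : N ≠ 0 := by omega
  have hNc : (N : ℂ) ≠ 0 := Nat.cast_ne_zero.mpr hN
  ext n m
  simp only [Emat, Matrix.transpose_apply, Ac, ringMat, Matrix.map_apply, Matrix.of_apply]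
  have expand : ∀ k ∈ range N, (gam N k - 1) * (gam N k ^ (m:ℕ) * (gam N k ^ (n:ℕ))⁻¹)
      = gam N k ^ ((m:ℕ)+1) * (gam N k ^ (n:ℕ))⁻¹ - gam N k ^ (m:ℕ) * (gam N k ^ (n:ℕ))⁻¹ := by
    intro k _
    rw [pow_succ]
    ring
  rw [Finset.sum_congr rfl expand, Finset.sum_sub_distrib, orthoMod N hN, orthoMod N hN]
  rw [Nat.mod_eq_of_lt m.isLt, Nat.mod_eq_of_lt n.isLt]
  by_cases h1 : (n : ℕ) = (m : ℕ)
  · have hne : ((m:ℕ)+1) % N ≠ (n:ℕ) := by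
      rw [h1]; exact succ_mod_ne N hN2 _ m.isLt
    simp only [if_neg hne, if_pos h1.symm, if_pos h1]
    push_cast
    field_simp
    ring
  · simp only [if_neg h1, if_neg (fun hc : (m:ℕ) = (n:ℕ) => h1 hc.symm)]
    by_cases h2 : (n : ℕ) = ((m:ℕ)+1) % N
    · simp only [if_pos h2.symm, if_pos h2]
      push_cast
      field_simp
      ring
    · simp only [if_neg (fun hc : ((m:ℕ)+1) % N = (n:ℕ) => h2 hc.symm), if_neg h2]
      simp

lemma Ac_eq (N : ℕ) (hN2 : 2 ≤ N) :
    Ac N = Emat N (fun k => (gam N k)⁻¹ - 1) := by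
  have hN : N ≠ 0 := by omega
  have hNc : (N : ℂ) ≠ 0 := Nat.cast_ne_zero.mpr hN
  ext n m
  simp only [Emat, Ac, ringMat, Matrix.map_apply, Matrix.of_apply]
  have expand : ∀ k ∈ range N, ((gam N k)⁻¹ - 1) * (gam N k ^ (m:ℕ) * (gam N k ^ (n:ℕ))⁻¹)
      = gam N k ^ (m:ℕ) * (gam N k ^ ((n:ℕ)+1))⁻¹ - gam N k ^ (m:ℕ) * (gam N k ^ (n:ℕ))⁻¹ := by
    intro k _
    rw [pow_succ, mul_inv]
    ring
  rw [Finset.sum_congr rfl expand, Finset.sum_sub_distrib, orthoMod N hN, orthoMod N hN]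
  rw [Nat.mod_eq_of_lt m.isLt, Nat.mod_eq_of_lt n.isLt]
  by_cases h1 : (m : ℕ) = (n : ℕ)
  · have hne : (m:ℕ) ≠ ((n:ℕ)+1) % N := by
      rw [h1]; exact (succ_mod_ne N hN2 _ n.isLt).symm
    simp only [if_neg hne, if_pos h1, if_pos h1]
    push_cast
    field_simp
    ring
  · simp only [if_neg h1, if_neg h1]
    by_cases h2 : (m : ℕ) = ((n:ℕ)+1) % N
    · simp only [if_pos h2, if_pos h2]
      push_cast
      field_simp
      ring
    · simp only [if_neg h2, if_neg h2]
      simp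

lemma gam_abs (N k : ℕ) : ‖gam N k‖ = 1 := by
  simp [gam, Complex.norm_exp]

lemma sub_ne (lam beta : ℝ) (hl : 0 < lam) (hb : 0 < beta) (γ : ℂ)
    (hγ : ‖γ‖ = 1) : (lam : ℂ) * (γ - 1) - (beta : ℂ) ≠ 0 := by
  intro h
  have hre := congrArg Complex.re h
  simp [Complex.mul_re, Complex.sub_re, Complex.ofReal_re, Complex.ofReal_im] at hre
  have h1 : γ.re ≤ 1 := hγ ▸ Complex.re_le_norm γ
  nlinarith

-- the three symbol nonvanishing statements
lemma hg2 (N : ℕ) (lam beta : ℝ) (hl : 0 < lam) (hb : 0 < beta)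
    (hinv : ∀ k < N, (beta : ℂ) + lam * (gam N k - 1) ≠ 0) :
    ∀ k < N, (lam : ℂ) ^ 2 * ((gam N k - 1) * (gam N k - 1)) - (beta : ℂ) ^ 2 * 1 ≠ 0 := by
  intro k hk
  have hfac : (lam : ℂ) ^ 2 * ((gam N k - 1) * (gam N k - 1)) - (beta : ℂ) ^ 2 * 1
      = ((lam : ℂ) * (gam N k - 1) - beta) * ((lam : ℂ) * (gam N k - 1) + beta) := by ring
  rw [hfac]
  refine mul_ne_zero (sub_ne lam beta hl hb _ (gam_abs N k)) ?_
  intro h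
  exact hinv k hk (by linear_combination h)

lemma hg4 (N : ℕ) (lam beta : ℝ) (hl : 0 < lam) (hb : 0 < beta) :
    ∀ k < N, (lam : ℂ) * ((gam N k)⁻¹ - 1) - (beta : ℂ) * 1 ≠ 0 := by
  intro k hk
  have := sub_ne lam beta hl hb (gam N k)⁻¹ (by rw [norm_inv, gam_abs, inv_one])
  intro h; exact this (by linear_combination h)

lemma hg5 (N : ℕ) (lam beta : ℝ) (hb : 0 < beta)
    (hinv : ∀ k < N, (beta : ℂ) + lam * (gam N k - 1) ≠ 0) :
    ∀ k < N, (lam : ℂ) * (gam N k - 1) + (beta : ℂ) * 1 ≠ 0 := by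
  intro k hk h
  exact hinv k hk (by linear_combination h)

lemma covMat_eq (N : ℕ) (hN2 : 2 ≤ N) (lam beta σ : ℝ) (hl : 0 < lam) (hb : 0 < beta)
    (hinv : ∀ k < N, (beta : ℂ) + lam * (gam N k - 1) ≠ 0) :
    covMat N lam beta σ = Emat N (fun k =>
      ((σ : ℂ) ^ 2 / lam) * (((N : ℂ)⁻¹ * (if k = 0 then (N : ℂ) else 0) - 1) *
        ((lam : ℂ) ^ 2 * ((gam N k - 1) * (gam N k - 1)) - (beta : ℂ) ^ 2 * 1)⁻¹) +
      ((σ : ℂ) ^ 2 / (2 * beta)) * (((gam N k)⁻¹ - 1) *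
        ((lam : ℂ) * ((gam N k)⁻¹ - 1) - (beta : ℂ) * 1)⁻¹ *
        ((lam : ℂ) * (gam N k - 1) + (beta : ℂ) * 1)⁻¹ * (gam N k - 1))) := by
  have hN : N ≠ 0 := by omega
  have e1 : (N : ℂ)⁻¹ • onesMat N - 1
      = Emat N (fun k => (N : ℂ)⁻¹ * (if k = 0 then (N : ℂ) else 0) - 1) := by
    rw [onesMat_eq N hN, Emat_smul, ← Emat_one N hN, Emat_sub]
  have e2 : (lam : ℂ) ^ 2 • ((Ac N)ᵀ * (Ac N)ᵀ) - (beta : ℂ) ^ 2 • 1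
      = Emat N (fun k => (lam : ℂ) ^ 2 * ((gam N k - 1) * (gam N k - 1)) - (beta : ℂ) ^ 2 * 1) := by
    rw [Act_eq N hN2, Emat_mul N hN, Emat_smul, ← Emat_one N hN, Emat_smul, Emat_sub]
  have e4 : (lam : ℂ) • Ac N - (beta : ℂ) • 1
      = Emat N (fun k => (lam : ℂ) * ((gam N k)⁻¹ - 1) - (beta : ℂ) * 1) := by
    rw [Ac_eq N hN2, Emat_smul, ← Emat_one N hN, Emat_smul, Emat_sub]
  have e5 : (lam : ℂ) • (Ac N)ᵀ + (beta : ℂ) • 1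
      = Emat N (fun k => (lam : ℂ) * (gam N k - 1) + (beta : ℂ) * 1) := by
    rw [Act_eq N hN2, Emat_smul, ← Emat_one N hN, Emat_smul, Emat_add]
  unfold covMat
  rw [e1, e2, e4, e5, Emat_inv N hN _ (hg2 N lam beta hl hb hinv),
    Emat_inv N hN _ (hg4 N lam beta hl hb), Emat_inv N hN _ (hg5 N lam beta hb hinv),
    Act_eq N hN2, Ac_eq N hN2]
  simp only [Emat_mul N hN, Emat_smul, Emat_add]

set_option maxHeartbeats 1600000 in
lemma entry_main (N : ℕ) (hN : 2 ≤ N) (lam beta σ : ℝ) (hlam : 0 < lam) (hbeta : 0 < beta)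
    (hinv : ∀ k < N, (beta : ℂ) + lam * (gam N k - 1) ≠ 0) :
    ∀ n m : Fin N, ∀ j : ℕ, j < N → (m : ℕ) = ((n : ℕ) + j) % N →
      Emat N (fun k =>
      ((σ : ℂ) ^ 2 / lam) * (((N : ℂ)⁻¹ * (if k = 0 then (N : ℂ) else 0) - 1) *
        ((lam : ℂ) ^ 2 * ((gam N k - 1) * (gam N k - 1)) - (beta : ℂ) ^ 2 * 1)⁻¹) +
      ((σ : ℂ) ^ 2 / (2 * beta)) * (((gam N k)⁻¹ - 1) *
        ((lam : ℂ) * ((gam N k)⁻¹ - 1) - (beta : ℂ) * 1)⁻¹ *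
        ((lam : ℂ) * (gam N k - 1) + (beta : ℂ) * 1)⁻¹ * (gam N k - 1))) n m =
        ((σ : ℂ) ^ 2 / (2 * beta * N)) *
          ∑ k ∈ Finset.Ico 1 N,
            gam N k ^ j / (lam - beta - lam * gam N k) *
              ((1 - gam N k) ^ 2 / (lam - (lam + beta) * gam N k) -
                2 * beta / (lam * (lam + beta - lam * gam N k))) := by
  intro n m j hj hm
  have hN0 : N ≠ 0 := by omega
  have hNc : (N : ℂ) ≠ 0 := Nat.cast_ne_zero.mpr hN0
  have hlc : (lam : ℂ) ≠ 0 := Complex.ofReal_ne_zero.mpr hlam.ne'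
  have hbc : (beta : ℂ) ≠ 0 := Complex.ofReal_ne_zero.mpr hbeta.ne'
  simp only [Emat, Matrix.of_apply]
  have hγj : ∀ k, gam N k ^ (m : ℕ) * (gam N k ^ (n : ℕ))⁻¹ = gam N k ^ j := by
    intro k
    rw [show (m : ℕ) = ((n : ℕ) + j) % N from hm, ← gam_pow_mod N k _ hN0, pow_add,
      mul_right_comm, mul_inv_cancel₀ (pow_ne_zero _ (gam_ne_zero N k)), one_mul]
  rw [Finset.sum_congr rfl fun k _ => by rw [hγj k]]
  have hins : range N = insert 0 (Finset.Ico 1 N) := by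
    ext x; simp [Finset.mem_Ico]; omega
  rw [hins, Finset.sum_insert (by simp)]
  have hzero : (((σ : ℂ) ^ 2 / lam) * (((N : ℂ)⁻¹ * (if 0 = 0 then (N : ℂ) else 0) - 1) *
        ((lam : ℂ) ^ 2 * ((gam N 0 - 1) * (gam N 0 - 1)) - (beta : ℂ) ^ 2 * 1)⁻¹) +
      ((σ : ℂ) ^ 2 / (2 * beta)) * (((gam N 0)⁻¹ - 1) *
        ((lam : ℂ) * ((gam N 0)⁻¹ - 1) - (beta : ℂ) * 1)⁻¹ *
        ((lam : ℂ) * (gam N 0 - 1) + (beta : ℂ) * 1)⁻¹ * (gam N 0 - 1))) * gam N 0 ^ j = 0 := by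
    rw [gam_zero]
    simp [inv_mul_cancel₀ hNc]
  rw [hzero, zero_add, Finset.mul_sum, Finset.mul_sum]
  refine Finset.sum_congr rfl fun k hk => ?_
  obtain ⟨hk1, hkN⟩ := Finset.mem_Ico.mp hk
  set γ := gam N k with hγdef
  have hγ0 : γ ≠ 0 := gam_ne_zero N k
  have h3 : (lam : ℂ) * (γ - 1) - (beta : ℂ) ≠ 0 := sub_ne lam beta hlam hbeta γ (gam_abs N k)
  have h4 : (lam : ℂ) * (γ - 1) + (beta : ℂ) * 1 ≠ 0 := by
    intro h; exact hinv k hkN (by linear_combination h)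
  have h1 : (lam : ℂ) * (γ⁻¹ - 1) - (beta : ℂ) * 1 ≠ 0 := by
    have := sub_ne lam beta hlam hbeta γ⁻¹ (by rw [norm_inv, gam_abs, inv_one])
    intro h; exact this (by linear_combination h)
  have hq : (lam : ℂ) ^ 2 * ((γ - 1) * (γ - 1)) - (beta : ℂ) ^ 2 * 1 ≠ 0 := by
    have hfac : (lam : ℂ) ^ 2 * ((γ - 1) * (γ - 1)) - (beta : ℂ) ^ 2 * 1
        = ((lam : ℂ) * (γ - 1) - beta) * ((lam : ℂ) * (γ - 1) + beta * 1) := by ring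
    rw [hfac]; exact mul_ne_zero h3 h4
  have h5 : (lam : ℂ) - beta - lam * γ ≠ 0 := by
    intro h; exact h4 (by linear_combination -h)
  have h7 : (lam : ℂ) + beta - lam * γ ≠ 0 := by
    intro h; exact h3 (by linear_combination -h)
  have h6 : (lam : ℂ) - (lam + beta) * γ ≠ 0 := by
    have hfac : γ * ((lam : ℂ) * (γ⁻¹ - 1) - (beta : ℂ) * 1) = (lam : ℂ) - (lam + beta) * γ := by
      field_simp; ring
    rw [← hfac]
    exact mul_ne_zero hγ0 h1
  rw [if_neg (by omega : ¬ k = 0)]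
  have rq : ((lam:ℂ)^2*((γ-1)*(γ-1)) - (beta:ℂ)^2*1)⁻¹
      = (((lam:ℂ)-beta-lam*γ)*((lam:ℂ)+beta-lam*γ))⁻¹ := by
    congr 1; ring
  have rv1 : (γ⁻¹ - 1) * ((lam:ℂ)*(γ⁻¹-1) - (beta:ℂ)*1)⁻¹
      = (1-γ) * ((lam:ℂ)-(lam+beta)*γ)⁻¹ := by
    rw [show (lam:ℂ)*(γ⁻¹-1) - (beta:ℂ)*1 = γ⁻¹*((lam:ℂ)-(lam+beta)*γ) by
      field_simp; ring]
    rw [mul_inv, inv_inv, ← mul_assoc, show (γ⁻¹-1)*γ = 1-γ by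
      rw [sub_mul, inv_mul_cancel₀ hγ0, one_mul]]
  have r4 : ((lam:ℂ)*(γ-1) + (beta:ℂ)*1)⁻¹ = -((lam:ℂ)-beta-lam*γ)⁻¹ := by
    rw [show (lam:ℂ)*(γ-1) + (beta:ℂ)*1 = -((lam:ℂ)-beta-lam*γ) by ring, inv_neg]
  rw [rq, rv1, r4]
  have hββ : (beta:ℂ) * (beta:ℂ)⁻¹ = 1 := mul_inv_cancel₀ hbc
  simp only [div_eq_mul_inv, mul_inv]
  linear_combination ((σ:ℂ)^2 * (lam:ℂ)⁻¹ * ((lam:ℂ)-beta-lam*γ)⁻¹ *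
    ((lam:ℂ)+beta-lam*γ)⁻¹ * (N:ℂ)⁻¹ * γ^j) * hββ

/-- the (n, n+j mod N) entry of M equals
(σ²/(2βN)) Σ_{k=1}^{N−1} (γ_k^j/(λ−β−λγ_k)) ((1−γ_k)²/(λ−(λ+β)γ_k) − 2β/(λ(λ+β−λγ_k))). -/
theorem stmt11 (N : ℕ) (hN : 2 ≤ N) (lam beta σ : ℝ) (hlam : 0 < lam) (hbeta : 0 < beta)
    (hinv : ∀ k < N, (beta : ℂ) + lam * (gam N k - 1) ≠ 0) :
    ∀ n m : Fin N, ∀ j : ℕ, j < N → (m : ℕ) = ((n : ℕ) + j) % N →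
      covMat N lam beta σ n m =
        ((σ : ℂ) ^ 2 / (2 * beta * N)) *
          ∑ k ∈ Finset.Ico 1 N,
            gam N k ^ j / (lam - beta - lam * gam N k) *
              ((1 - gam N k) ^ 2 / (lam - (lam + beta) * gam N k) -
                2 * beta / (lam * (lam + beta - lam * gam N k))) := by
  intro n m j hj hm
  rw [covMat_eq N hN lam beta σ hlam hbeta hinv]
  exact entry_main N hN lam beta σ hlam hbeta hinv n m j hj hm
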